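/- arXiv:2001.06045 — 3 statements merged into one kernel-verified Lean document; each statement's English description precedes it below -/
import Mathlib

section
/- Let 0 < L < 2π and let φ : ℝ → ℝ be a C² function that is L-periodic and satisfies the stationary Allen–Cahn equation φ''(x) + φ(x) - φ(x)³ = 0 for all x ∈ ℝ. Then φ is constant, and its constant value belongs to {0, 1, -1}. -/
open Real

section AuxiliaryLemmas
open MeasureTheory Set intervalIntegral
open scoped ENNReal


/-- Parseval's identity for a continuous periodic function, in interval form. -/
lemma parseval_interval {T : ℝ} [hT : Fact (0 < T)] (f : ℝ → ℂ) (hf : Continuous f)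
    (hper : f 0 = f (0 + T)) :
    Summable (fun n : ℤ => ‖fourierCoeffOn (lt_add_of_pos_right 0 hT.out) f n‖ ^ 2) ∧
    ∑' n : ℤ, ‖fourierCoeffOn (lt_add_of_pos_right 0 hT.out) f n‖ ^ 2
      = (1 / T) * ∫ x in (0:ℝ)..(0 + T), ‖f x‖ ^ 2 := by
  set G : C(AddCircle T, ℂ) :=
    ⟨AddCircle.liftIco T 0 f, AddCircle.liftIco_continuous hper hf.continuousOn⟩ with hG
  have hcoeff : ∀ n : ℤ, fourierCoeff (G : AddCircle T → ℂ) n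
      = fourierCoeffOn (lt_add_of_pos_right 0 hT.out) f n := by
    intro n
    exact fourierCoeff_liftIco_eq f n
  set F := ContinuousMap.toLp (E := ℂ) 2 AddCircle.haarAddCircle ℂ G with hF
  have hcoeff' : ∀ n : ℤ, fourierCoeff (F : AddCircle T → ℂ) n
      = fourierCoeffOn (lt_add_of_pos_right 0 hT.out) f n := by
    intro n; rw [fourierCoeff_toLp, hcoeff]
  have hGcoe : ∀ x : ℝ, x ∈ Ioc (0:ℝ) (0 + T) → G ((x : ℝ) : AddCircle T) = f x := by
    intro x hx
    rcases lt_or_eq_of_le hx.2 with h | h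
    · exact AddCircle.liftIco_coe_apply ⟨hx.1.le, h⟩
    · have : ((x:ℝ) : AddCircle T) = ((0:ℝ) : AddCircle T) := by
        rw [h]; simpa using AddCircle.coe_add_period T 0
      rw [this, h, ← hper]
      exact AddCircle.liftIco_coe_apply ⟨le_refl _, by simpa using hT.out⟩
  -- summability
  have hsum : Summable (fun n : ℤ => ‖fourierCoeffOn (lt_add_of_pos_right 0 hT.out) f n‖ ^ 2) := by
    have h1 : Summable fun n : ℤ => ‖fourierBasis.repr F n‖ ^ ((2:ℝ≥0∞).toReal) :=
      (lp.memℓp (fourierBasis.repr F)).summable (by norm_num)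
    have h2 : ∀ n : ℤ, ‖fourierBasis.repr F n‖ ^ ((2:ℝ≥0∞).toReal)
        = ‖fourierCoeffOn (lt_add_of_pos_right 0 hT.out) f n‖ ^ 2 := by
      intro n
      rw [fourierBasis_repr, hcoeff']
      norm_num [Real.rpow_natCast]
    exact (summable_congr h2).mp h1
  refine ⟨hsum, ?_⟩
  have hpars := tsum_sq_fourierCoeff F
  simp_rw [hcoeff'] at hpars
  rw [hpars]
  -- now compute the RHS integral
  have hae : ∀ᵐ t ∂(AddCircle.haarAddCircle : Measure (AddCircle T)), ‖F t‖^2 = ‖G t‖^2 := by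
    filter_upwards [ContinuousMap.coeFn_toLp (p := 2) (μ := AddCircle.haarAddCircle) (𝕜 := ℂ) G] with t ht
    rw [ht]
  rw [integral_congr_ae hae]
  have hvol : ∫ t : AddCircle T, ‖G t‖^2 ∂(volume)
      = T * ∫ t : AddCircle T, ‖G t‖^2 ∂(AddCircle.haarAddCircle) := by
    rw [AddCircle.volume_eq_smul_haarAddCircle, MeasureTheory.integral_smul_measure,
      ENNReal.toReal_ofReal hT.out.le, smul_eq_mul]
  have hpre := AddCircle.integral_preimage T 0 (fun t : AddCircle T => ‖G t‖^2)
  rw [intervalIntegral.integral_of_le (by linarith [hT.out] : (0:ℝ) ≤ 0 + T)]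
  have : ∫ x in Ioc (0:ℝ) (0+T), ‖f x‖^2 = ∫ x in Ioc (0:ℝ) (0+T), ‖G ((x:ℝ) : AddCircle T)‖^2 := by
    refine setIntegral_congr_fun measurableSet_Ioc fun x hx => ?_
    rw [hGcoe x hx]
  rw [this, hpre, hvol]
  rw [one_div, inv_mul_cancel_left₀ hT.out.ne']


/-- A continuous periodic function whose squared integral over a period vanishes is zero. -/
lemma sq_integral_zero_of_periodic {v : ℝ → ℝ} (hv : Continuous v) {L : ℝ} (hL : 0 < L)
    (hper : Function.Periodic v L) (hA : ∫ x in (0:ℝ)..L, v x ^ 2 = 0) : ∀ t, v t = 0 := by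
  intro t
  by_contra h
  have hper2 : Function.Periodic (fun x => v x ^ 2) L := fun x => by simp [hper x]
  have hshift : ∫ x in (t - L/2)..(t - L/2 + L), v x ^ 2 = (0:ℝ) := by
    rw [hper2.intervalIntegral_add_eq (t - L/2) 0, zero_add, hA]
  have hvt : 0 < v t ^ 2 := by positivity
  set ε := v t ^ 2 / 2 with hε
  have hεpos : 0 < ε := by positivity
  have hcont : ContinuousAt (fun x => v x ^ 2) t := (hv.pow 2).continuousAt
  obtain ⟨δ, hδ, hball⟩ := Metric.continuousAt_iff.mp hcont ε hεpos
  set r := min (δ/2) (L/2) with hr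
  have hrpos : 0 < r := by positivity
  have hlow : ∀ x ∈ Icc (t - r) (t + r), ε ≤ v x ^ 2 := by
    intro x hx
    have hdist : dist x t < δ := by
      rw [Real.dist_eq]
      have h1 : x - t ≤ r := by linarith [hx.2]
      have h2 : -(r) ≤ x - t := by linarith [hx.1]
      have : |x - t| ≤ r := abs_le.mpr ⟨h2, h1⟩
      have : r ≤ δ/2 := min_le_left _ _
      linarith [abs_le.mpr ⟨h2, h1⟩]
    have := hball hdist
    rw [Real.dist_eq, abs_lt] at this
    linarith [this.1]
  have hint : ∀ a b : ℝ, IntervalIntegrable (fun x => v x ^ 2) volume a b :=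
    fun a b => (hv.pow 2).intervalIntegrable a b
  have hsplit1 : (∫ x in (t - L/2)..(t - r), v x ^ 2) + ∫ x in (t - r)..(t - L/2 + L), v x ^ 2
      = (0:ℝ) := by
    rw [integral_add_adjacent_intervals (hint _ _) (hint _ _)]; exact hshift
  have hsplit2 : (∫ x in (t - r)..(t + r), v x ^ 2) + ∫ x in (t + r)..(t - L/2 + L), v x ^ 2
      = ∫ x in (t - r)..(t - L/2 + L), v x ^ 2 := by
    apply integral_add_adjacent_intervals (hint _ _) (hint _ _)
  have hr2 : r ≤ L/2 := min_le_right _ _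
  have h1 : (0:ℝ) ≤ ∫ x in (t - L/2)..(t - r), v x ^ 2 :=
    integral_nonneg (by linarith) (fun x _ => sq_nonneg _)
  have h2 : (0:ℝ) ≤ ∫ x in (t + r)..(t - L/2 + L), v x ^ 2 :=
    integral_nonneg (by linarith) (fun x _ => sq_nonneg _)
  have h3 : ε * (2 * r) ≤ ∫ x in (t - r)..(t + r), v x ^ 2 := by
    have := integral_mono_on (by linarith : t - r ≤ t + r)
      (intervalIntegrable_const) (hint _ _) hlow
    rw [intervalIntegral.integral_const] at this
    calc ε * (2 * r) = (t + r - (t - r)) • ε := by rw [smul_eq_mul]; ring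
    _ ≤ _ := this
  nlinarith [mul_pos hεpos hrpos]

end AuxiliaryLemmas

section Main
open MeasureTheory Set intervalIntegral
open scoped ENNReal

/-- For `0 < L < 2π`, every `L`-periodic `C²` solution of the stationary
Allen–Cahn equation `φ'' + φ - φ³ = 0` is constant, with value `0`, `1` or `-1`. -/
theorem stationary_allen_cahn_solutions (L : ℝ) (hL : 0 < L) (hL' : L < 2 * π)
    (φ : ℝ → ℝ) (hφ : ContDiff ℝ 2 φ) (hper : ∀ x, φ (x + L) = φ x)
    (heq : ∀ x, deriv (deriv φ) x + φ x - (φ x) ^ 3 = 0) :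
    ∃ c : ℝ, (∀ x, φ x = c) ∧ (c = 0 ∨ c = 1 ∨ c = -1) := by
  have hπ := Real.pi_pos
  haveI hF : Fact (0 < L) := ⟨hL⟩
  have hperφ : Function.Periodic φ L := hper
  have hφd : Differentiable ℝ φ := hφ.differentiable (by norm_num)
  set u := deriv φ with hu
  have hu1 : ContDiff ℝ 1 u := by
    have h2 : ContDiff ℝ (1 + 1) φ := by norm_num [hφ]
    exact (contDiff_succ_iff_deriv.mp h2).2.2
  have hud : Differentiable ℝ u := hu1.differentiable (by norm_num)
  have hucont : Continuous u := hu1.continuous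
  set w : ℝ → ℝ := fun x => φ x ^ 3 - φ x with hw
  have hwcont : Continuous w := by fun_prop
  have hderiv_u : ∀ x, deriv u x = w x := by
    intro x; have := heq x; simp only [hw, hu]; linarith
  have hperu : Function.Periodic u L := by
    intro x
    have hshift : (fun y => φ (y + L)) = φ := funext hper
    have : deriv (fun y => φ (y + L)) x = deriv φ (x + L) := by
      simpa using deriv_comp_add_const φ L x
    rw [hu, ← this, hshift]
  have hperw : Function.Periodic w L := fun x => by simp [hw, hper x]
  have hUw : ∀ x, HasDerivAt u (w x) x := fun x => hderiv_u x ▸ (hud x).hasDerivAt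
  have hUphi : ∀ x, HasDerivAt φ (u x) x := fun x => (hφd x).hasDerivAt
  set A := ∫ x in (0:ℝ)..(0 + L), u x ^ 2 with hA
  set B := ∫ x in (0:ℝ)..(0 + L), w x ^ 2 with hB
  have hA0 : 0 ≤ A := integral_nonneg (by linarith) (fun x _ => sq_nonneg _)
  have hB0 : 0 ≤ B := integral_nonneg (by linarith) (fun x _ => sq_nonneg _)
  -- integration by parts: B = A - 3∫(φu)²
  have hw' : ∀ x, HasDerivAt w (3 * φ x ^ 2 * u x - u x) x := by
    intro x
    have h1 := ((hUphi x).pow 3).sub (hUphi x)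
    exact h1.congr_deriv (by norm_num)
  have hparts := intervalIntegral.integral_mul_deriv_eq_deriv_mul
    (u := w) (v := u) (u' := fun x => 3 * φ x ^ 2 * u x - u x) (v' := w)
    (a := 0) (b := 0 + L)
    (fun x _ => hw' x) (fun x _ => hUw x)
    (((continuous_const.mul (hφ.continuous.pow 2)).mul hucont |>.sub hucont).intervalIntegrable _ _)
    (hwcont.intervalIntegrable _ _)
  have hAB : B ≤ A := by
    have hbnd : w (0 + L) * u (0 + L) - w 0 * u 0 = 0 := by
      rw [hperw 0, hperu 0]; ring
    have e1 : B = ∫ x in (0:ℝ)..(0 + L), w x * w x := by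
      rw [hB]; apply intervalIntegral.integral_congr; intro x _; simp [sq]
    have e2 : B = - ∫ x in (0:ℝ)..(0 + L), (3 * φ x ^ 2 * u x - u x) * u x := by
      rw [e1, hparts, hbnd, zero_sub]
    have e3 : B = ∫ x in (0:ℝ)..(0 + L), (u x ^ 2 - 3 * (φ x * u x) ^ 2) := by
      rw [e2, ← intervalIntegral.integral_neg]
      apply intervalIntegral.integral_congr; intro x _; ring
    have e4 : B = A - 3 * ∫ x in (0:ℝ)..(0 + L), (φ x * u x) ^ 2 := by
      rw [e3, intervalIntegral.integral_sub (f := fun x => u x ^ 2) (g := fun x => 3 * (φ x * u x) ^ 2) ((hucont.pow 2).intervalIntegrable _ _)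
        ((continuous_const.mul ((hφ.continuous.mul hucont).pow 2)).intervalIntegrable _ _),
        intervalIntegral.integral_const_mul]
    have h5 : 0 ≤ ∫ x in (0:ℝ)..(0 + L), (φ x * u x) ^ 2 :=
      integral_nonneg (by linarith) (fun x _ => sq_nonneg _)
    rw [e4]; linarith
  -- Fourier / Wirtinger part
  set g : ℝ → ℂ := fun x => (u x : ℂ) with hg
  set gw : ℝ → ℂ := fun x => (w x : ℂ) with hgw
  have hgc : Continuous g := Complex.continuous_ofReal.comp hucont
  have hgwc : Continuous gw := Complex.continuous_ofReal.comp hwcont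
  have hgper : g 0 = g (0 + L) := by rw [hg]; show ((u 0 : ℝ) : ℂ) = ((u (0+L) : ℝ) : ℂ); exact_mod_cast (hperu 0).symm
  have hgwper : gw 0 = gw (0 + L) := by rw [hgw]; show ((w 0 : ℝ) : ℂ) = ((w (0+L) : ℝ) : ℂ); exact_mod_cast (hperw 0).symm
  obtain ⟨hsumg, hsumeqg⟩ := parseval_interval g hgc hgper
  obtain ⟨hsumw, hsumeqw⟩ := parseval_interval gw hgwc hgwper
  set hab := lt_add_of_pos_right (0:ℝ) hF.out with hhab
  -- the zeroth coefficient of g vanishes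
  have hc0 : fourierCoeffOn hab g 0 = 0 := by
    rw [fourierCoeffOn_eq_integral]
    have : ∫ x in (0:ℝ)..(0 + L), fourier (-(0:ℤ)) (x : AddCircle (0 + L - 0)) • g x
        = ∫ x in (0:ℝ)..(0 + L), g x := by
      apply intervalIntegral.integral_congr; intro x _
      simp [fourier_zero]
    rw [this]
    have hgint : ∫ x in (0:ℝ)..(0 + L), g x = ((∫ x in (0:ℝ)..(0 + L), u x : ℝ) : ℂ) := by
      rw [hg]; exact intervalIntegral.integral_ofReal
    have huint : ∫ x in (0:ℝ)..(0 + L), u x = φ (0 + L) - φ 0 := by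
      rw [hu]
      exact intervalIntegral.integral_deriv_eq_sub (fun x _ => hφd x)
        (hucont.intervalIntegrable _ _)
    rw [hgint, huint, hper 0, sub_self]
    simp
  -- coefficient bound
  have hbound : ∀ n : ℤ, ‖fourierCoeffOn hab g n‖ ^ 2
      ≤ (L / (2 * π)) ^ 2 * ‖fourierCoeffOn hab gw n‖ ^ 2 := by
    intro n
    rcases eq_or_ne n 0 with rfl | hn
    · rw [hc0]; simp; positivity
    · have hder := fourierCoeffOn_of_hasDerivAt hab hn
        (f := g) (f' := gw) (fun x _ => (hUw x).ofReal_comp)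
        (hgwc.intervalIntegrable _ _)
      rw [← hgper, sub_self, mul_zero, zero_sub] at hder
      have hnormc : ‖fourierCoeffOn hab g n‖
          = 1 / (2 * π * |(n : ℝ)|) * (L * ‖fourierCoeffOn hab gw n‖) := by
        rw [hder, norm_mul, norm_neg, norm_mul]
        congr 1
        · simp [map_mul, Complex.norm_real, Complex.norm_intCast,
            Complex.norm_I, abs_of_pos hπ]
        · congr 1
          simp [Complex.norm_real, abs_of_pos hL]
      have hn1 : (1 : ℝ) ≤ |(n : ℝ)| := by
        rw [← Int.cast_abs]
        exact_mod_cast Int.one_le_abs hn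
      have hle : ‖fourierCoeffOn hab g n‖ ≤ L / (2 * π) * ‖fourierCoeffOn hab gw n‖ := by
        rw [hnormc]
        have key : 1 / (2 * π * |(n : ℝ)|) ≤ 1 / (2 * π) := by
          apply one_div_le_one_div_of_le (by positivity)
          nlinarith
        calc 1 / (2 * π * |(n : ℝ)|) * (L * ‖fourierCoeffOn hab gw n‖)
            ≤ 1 / (2 * π) * (L * ‖fourierCoeffOn hab gw n‖) :=
              mul_le_mul_of_nonneg_right key (by positivity)
          _ = L / (2 * π) * ‖fourierCoeffOn hab gw n‖ := by ring
      calc ‖fourierCoeffOn hab g n‖ ^ 2 ≤ (L / (2 * π) * ‖fourierCoeffOn hab gw n‖) ^ 2 := by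
            apply pow_le_pow_left₀ (norm_nonneg _) hle
        _ = (L / (2 * π)) ^ 2 * ‖fourierCoeffOn hab gw n‖ ^ 2 := by ring
  -- assemble
  have hAg : ∫ x in (0:ℝ)..(0 + L), ‖g x‖ ^ 2 = A := by
    rw [hA]; apply intervalIntegral.integral_congr; intro x _
    simp [hg, Complex.norm_real, sq_abs]
  have hBw : ∫ x in (0:ℝ)..(0 + L), ‖gw x‖ ^ 2 = B := by
    rw [hB]; apply intervalIntegral.integral_congr; intro x _
    simp [hgw, Complex.norm_real, sq_abs]
  have hts : (1 / L) * A ≤ (L / (2 * π)) ^ 2 * ((1 / L) * B) := by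
    rw [← hAg, ← hsumeqg]
    have h1 : ∑' n : ℤ, ‖fourierCoeffOn hab g n‖ ^ 2
        ≤ ∑' n : ℤ, (L / (2 * π)) ^ 2 * ‖fourierCoeffOn hab gw n‖ ^ 2 :=
      Summable.tsum_le_tsum hbound hsumg (hsumw.mul_left _)
    rw [tsum_mul_left, hsumeqw, hBw] at h1
    exact h1
  have hk1 : (L / (2 * π)) ^ 2 < 1 := by
    rw [div_pow, div_lt_one (by positivity)]
    nlinarith
  have hAkB : A ≤ (L / (2 * π)) ^ 2 * B := by
    have := mul_le_mul_of_nonneg_left hts hL.le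
    rw [← mul_assoc] at this
    calc A = L * ((1/L) * A) := by field_simp
      _ ≤ L * ((L / (2 * π)) ^ 2 * ((1/L) * B)) := mul_le_mul_of_nonneg_left hts hL.le
      _ = (L / (2 * π)) ^ 2 * B := by field_simp
  have hAzero : A = 0 := by nlinarith
  -- u vanishes identically
  have huz : ∀ t, u t = 0 := by
    apply sq_integral_zero_of_periodic hucont hL hperu
    have hAL : ∫ x in (0:ℝ)..L, u x ^ 2 = A := by rw [hA, zero_add]
    rw [hAL]; exact hAzero
  have hconst : ∀ x, φ x = φ 0 := fun x => is_const_of_deriv_eq_zero hφd huz x 0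
  refine ⟨φ 0, hconst, ?_⟩
  have hdd : deriv (deriv φ) 0 = 0 := by
    have : deriv φ = fun _ => (0:ℝ) := funext huz
    rw [this, deriv_const]
  have h0 := heq 0
  rw [hdd] at h0
  have hprod : φ 0 * (φ 0 - 1) * (φ 0 + 1) = 0 := by linear_combination -h0
  rcases mul_eq_zero.mp hprod with h | h
  · rcases mul_eq_zero.mp h with h | h
    · exact Or.inl h
    · exact Or.inr (Or.inl (by linarith))
  · exact Or.inr (Or.inr (by linarith))
end Main
end

section
/- Let 0 < L < 2π. Then the infinite product over k ∈ ℤ of ( 1 + 3 / ( (2πk/L)² - 1 ) ) converges (the family is multipliable) and its value is ∏_{k ∈ ℤ} ( 1 + 3 / ( (2πk/L)² - 1 ) ) = - sinh²(L/√2) / sin²(L/2). -/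
open Real Filter Finset Topology

lemma sin_prod_tendsto (x : ℝ) (hx : x ≠ 0) :
    Tendsto (fun n : ℕ => ∏ j ∈ Finset.range n, ((1 : ℝ) - x ^ 2 / ((j : ℝ) + 1) ^ 2))
      atTop (𝓝 (Real.sin (π * x) / (π * x))) := by
  have hpx : π * x ≠ 0 := mul_ne_zero Real.pi_ne_zero hx
  have h := (Real.tendsto_euler_sin_prod x).div_const (π * x)
  refine h.congr fun n => ?_
  rw [mul_comm, mul_div_assoc, div_self hpx, mul_one]

lemma sinh_prod_tendsto (x : ℝ) (hx : x ≠ 0) :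
    Tendsto (fun n : ℕ => ∏ j ∈ Finset.range n, ((1 : ℝ) + x ^ 2 / ((j : ℝ) + 1) ^ 2))
      atTop (𝓝 (Real.sinh (π * x) / (π * x))) := by
  have hI : (Complex.I : ℂ) ≠ 0 := Complex.I_ne_zero
  have hxC : (x : ℂ) ≠ 0 := by exact_mod_cast hx
  have hpC : (π : ℂ) ≠ 0 := by exact_mod_cast Real.pi_ne_zero
  have hd : (π : ℂ) * ((x : ℂ) * Complex.I) ≠ 0 := mul_ne_zero hpC (mul_ne_zero hxC hI)
  have h2 := (Complex.tendsto_euler_sin_prod ((x : ℂ) * Complex.I)).div_const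
    ((π : ℂ) * ((x : ℂ) * Complex.I))
  have h3 : Tendsto (fun n : ℕ =>
      (((∏ j ∈ Finset.range n, ((1 : ℝ) + x ^ 2 / ((j : ℝ) + 1) ^ 2)) : ℝ) : ℂ))
      atTop (𝓝 (((Real.sinh (π * x) / (π * x) : ℝ) : ℂ))) := by
    have heq : ∀ n : ℕ,
        ((π : ℂ) * ((x : ℂ) * Complex.I) *
          ∏ j ∈ Finset.range n, (1 - ((x : ℂ) * Complex.I) ^ 2 / ((j : ℂ) + 1) ^ 2)) /
          ((π : ℂ) * ((x : ℂ) * Complex.I)) =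
        (((∏ j ∈ Finset.range n, ((1 : ℝ) + x ^ 2 / ((j : ℝ) + 1) ^ 2)) : ℝ) : ℂ) := by
      intro n
      rw [mul_comm, mul_div_assoc, div_self hd, mul_one]
      push_cast
      refine Finset.prod_congr rfl fun j _ => ?_
      have : ((x : ℂ) * Complex.I) ^ 2 = -(x : ℂ) ^ 2 := by
        rw [mul_pow, Complex.I_sq]; ring
      rw [this]; ring
    have hlim : Complex.sin ((π : ℂ) * ((x : ℂ) * Complex.I)) /
        ((π : ℂ) * ((x : ℂ) * Complex.I)) = ((Real.sinh (π * x) / (π * x) : ℝ) : ℂ) := by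
      have h1 : (π : ℂ) * ((x : ℂ) * Complex.I) = ((π * x : ℝ) : ℂ) * Complex.I := by
        push_cast; ring
      rw [h1, Complex.sin_mul_I, ← Complex.ofReal_sinh]
      rw [mul_div_mul_right _ _ hI, ← Complex.ofReal_div]
    rw [← hlim]
    exact h2.congr heq
  exact Filter.tendsto_ofReal_iff.mp h3

set_option maxHeartbeats 1000000 in
/-- For `0 < L < 2π`, the Fredholm determinant
`det(1 + 3(-Δ-1)⁻¹) = ∏_{k ∈ ℤ} (1 + 3/((2πk/L)² - 1))` converges and equals
`- sinh²(L/√2) / sin²(L/2)`. -/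
theorem fredholm_determinant_one_dim (L : ℝ) (hL : 0 < L) (hL' : L < 2 * π) :
    Multipliable (fun k : ℤ => 1 + 3 / ((2 * π * k / L) ^ 2 - 1)) ∧
    ∏' k : ℤ, (1 + 3 / ((2 * π * k / L) ^ 2 - 1)) =
      - (Real.sinh (L / Real.sqrt 2)) ^ 2 / (Real.sin (L / 2)) ^ 2 := by
  have hL0 : L ≠ 0 := ne_of_gt hL
  have hpi : (0:ℝ) < π := Real.pi_pos
  set y : ℝ := L / (2 * π) with hy_def
  have hy0 : 0 < y := div_pos hL (by positivity)
  have hy1 : y < 1 := (div_lt_one (by positivity)).mpr hL'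
  have hs2pos : (0:ℝ) < Real.sqrt 2 := Real.sqrt_pos.mpr (by norm_num)
  have hs2 : (Real.sqrt 2) ^ 2 = 2 := Real.sq_sqrt (by norm_num)
  have hpy : π * y = L / 2 := by
    rw [hy_def]; field_simp
  have hpa : π * (Real.sqrt 2 * y) = L / Real.sqrt 2 := by
    rw [hy_def, eq_div_iff (ne_of_gt hs2pos)]
    field_simp
    linear_combination hs2
  have hsinv : Real.sin (L / 2) > 0 := by
    apply Real.sin_pos_of_pos_of_lt_pi (by positivity)
    rw [div_lt_iff₀ (by norm_num : (0:ℝ) < 2)]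
    nlinarith
  -- the shifted term on ℕ
  set F : ℕ → ℝ := fun j => 1 + 3 / ((2 * π * ((j:ℝ) + 1) / L) ^ 2 - 1) with hF_def
  have hden : ∀ j : ℕ, (0:ℝ) < (2 * π * ((j:ℝ) + 1) / L) ^ 2 - 1 := by
    intro j
    have h1 : (1:ℝ) < 2 * π * ((j:ℝ) + 1) / L := by
      rw [lt_div_iff₀ hL]
      have : (1:ℝ) ≤ (j:ℝ) + 1 := by
        have := Nat.cast_nonneg (α := ℝ) j; linarith
      nlinarith
    nlinarith
  have hFpos : ∀ j : ℕ, (0:ℝ) < F j := by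
    intro j
    have h3 : 0 < 3 / ((2 * π * ((j:ℝ) + 1) / L) ^ 2 - 1) :=
      div_pos (by norm_num) (hden j)
    simp only [hF_def]; linarith
  -- F as a quotient
  have hFq : ∀ j : ℕ, F j =
      (1 + (Real.sqrt 2 * y) ^ 2 / ((j:ℝ) + 1) ^ 2) / (1 - y ^ 2 / ((j:ℝ) + 1) ^ 2) := by
    intro j
    have hj1 : (0:ℝ) < (j:ℝ) + 1 := by positivity
    have hjy : y ^ 2 < ((j:ℝ)+1) ^ 2 := by nlinarith
    have hdj := hden j
    have hyv : 2 * π * ((j:ℝ) + 1) / L = ((j:ℝ)+1) / y := by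
      rw [hy_def]; field_simp
    have hne1 : (((j:ℝ)+1) / y) ^ 2 - 1 ≠ 0 := by rw [← hyv]; exact ne_of_gt hdj
    have hne2 : 1 - y ^ 2 / ((j:ℝ)+1) ^ 2 ≠ 0 := by
      have : 0 < 1 - y ^ 2 / ((j:ℝ)+1) ^ 2 := by
        rw [sub_pos, div_lt_one (by positivity)]; exact hjy
      exact ne_of_gt this
    have hne3 : ((j:ℝ)+1) ^ 2 - y ^ 2 ≠ 0 := by nlinarith
    simp only [hF_def]
    rw [mul_pow, hs2, hyv]
    field_simp
    ring
  -- value of the limit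
  set T : ℝ := (Real.sinh (L / Real.sqrt 2) / (L / Real.sqrt 2)) /
      (Real.sin (L / 2) / (L / 2)) with hT_def
  have hTend : Tendsto (fun n : ℕ => ∏ j ∈ Finset.range n, F j) atTop (𝓝 T) := by
    have h1 := sinh_prod_tendsto (Real.sqrt 2 * y) (by positivity)
    have h2 := sin_prod_tendsto y (ne_of_gt hy0)
    rw [hpa] at h1
    rw [hpy] at h2
    have hne : Real.sin (L / 2) / (L / 2) ≠ 0 := by positivity
    have := h1.div h2 hne
    rw [← hT_def] at this
    refine this.congr fun n => ?_
    rw [Pi.div_apply, ← Finset.prod_div_distrib]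
    exact Finset.prod_congr rfl fun j _ => (hFq j).symm
  -- summability of logs, hence multipliability
  have hFsum : Summable fun j : ℕ => Real.log (F j) := by
    set c : ℝ := (2 * π / L) ^ 2 with hc_def
    have hc1 : 1 < c := by
      rw [hc_def]
      have : 1 < 2 * π / L := (one_lt_div hL).mpr hL'
      nlinarith
    have hbase : Summable fun j : ℕ => (3 / (c - 1)) * (1 / ((j:ℝ) + 1) ^ 2) := by
      apply Summable.mul_left
      have h0 : Summable fun n : ℕ => 1 / ((n:ℝ)) ^ 2 := by
        simpa using Real.summable_one_div_nat_pow.mpr (by norm_num : 1 < 2)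
      have := (summable_nat_add_iff 1).mpr h0
      refine this.congr fun n => ?_
      push_cast; ring
    refine Summable.of_nonneg_of_le (fun j => Real.log_nonneg ?_) (fun j => ?_) hbase
    · have := hden j
      have : 0 ≤ 3 / ((2 * π * ((j:ℝ) + 1) / L) ^ 2 - 1) := by positivity
      simp only [hF_def]; linarith
    · have hdj := hden j
      have hlog : Real.log (F j) ≤ F j - 1 := by
        have := Real.log_le_sub_one_of_pos (hFpos j)
        linarith
      have hF1 : F j - 1 = 3 / ((2 * π * ((j:ℝ) + 1) / L) ^ 2 - 1) := by
        simp only [hF_def]; ring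
      have hsq : (2 * π * ((j:ℝ) + 1) / L) ^ 2 = c * ((j:ℝ)+1) ^ 2 := by
        rw [hc_def]; field_simp
      have hj1 : (1:ℝ) ≤ ((j:ℝ)+1) ^ 2 := by nlinarith [Nat.cast_nonneg (α := ℝ) j]
      have hlow : (c - 1) * ((j:ℝ)+1) ^ 2 ≤ (2 * π * ((j:ℝ) + 1) / L) ^ 2 - 1 := by
        rw [hsq]; nlinarith
      have hpos2 : (0:ℝ) < (c - 1) * ((j:ℝ)+1) ^ 2 := by
        apply mul_pos (by linarith) (by positivity)
      calc Real.log (F j) ≤ F j - 1 := hlog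
        _ = 3 / ((2 * π * ((j:ℝ) + 1) / L) ^ 2 - 1) := hF1
        _ ≤ 3 / ((c - 1) * ((j:ℝ)+1) ^ 2) := by
            apply div_le_div_of_nonneg_left (by norm_num) hpos2 hlow
        _ = (3 / (c - 1)) * (1 / ((j:ℝ) + 1) ^ 2) := by
            rw [div_mul_div_comm, mul_one]
  have hFmul : Multipliable F := by
    exact Real.multipliable_of_summable_log hFpos hFsum
  have hFprod : ∏' j : ℕ, F j = T :=
    tendsto_nhds_unique (hFmul.hasProd.tendsto_prod_nat) hTend
  -- relate to ℤ-indexed function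
  set f : ℤ → ℝ := fun k => 1 + 3 / ((2 * π * (k:ℝ) / L) ^ 2 - 1) with hf_def
  have hshift : (fun n : ℕ => f ((n:ℤ) + 1)) = F := by
    funext n; simp only [hf_def, hF_def]; push_cast; ring_nf
  have hshift' : (fun n : ℕ => f (-(((n:ℤ)) + 1))) = F := by
    funext n; simp only [hf_def, hF_def]; push_cast
    rw [show 2 * π * (-((n:ℝ) + 1)) / L = -(2 * π * ((n:ℝ) + 1) / L) by ring, neg_sq]
  have hnat_shift : (fun n : ℕ => f ((n:ℤ))) ∘ (fun n => n + 1) = F := by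
    funext n; simp only [Function.comp, hf_def, hF_def]; push_cast; ring_nf
  have hMnat1 : Multipliable fun n : ℕ => f ((n:ℤ) + 1) := by rw [hshift]; exact hFmul
  have hMnat : Multipliable fun n : ℕ => f ((n:ℤ)) := by
    apply Multipliable.comp_nat_add (k := 1)
    refine hFmul.congr fun n => ?_
    simp only [hf_def, hF_def]; push_cast; ring_nf
  have hMneg : Multipliable fun n : ℕ => f (-((n:ℤ) + 1)) := by
    refine hFmul.congr fun n => ?_
    exact (congrFun hshift' n).symm
  have hMZ : Multipliable f := Multipliable.of_nat_of_neg_add_one hMnat hMneg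
  constructor
  · exact hMZ
  · have hZval : ∏' k : ℤ, f k = (∏' n : ℕ, f ((n:ℤ))) * ∏' n : ℕ, f (-((n:ℤ) + 1)) :=
      tprod_of_nat_of_neg_add_one hMnat hMneg
    have hneg_val : ∏' n : ℕ, f (-((n:ℤ) + 1)) = T := by
      rw [tprod_congr fun n => congrFun hshift' n, hFprod]
    have hf0 : f 0 = -2 := by
      simp only [hf_def]
      norm_num
    have hnat_val : ∏' n : ℕ, f ((n:ℤ)) = -2 * T := by
      have hsh : Multipliable fun n : ℕ => f (((n:ℤ)) + 1) := hMnat1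
      have h1 : ∏' n : ℕ, f ((n:ℤ)) = f ((0:ℕ):ℤ) * ∏' n : ℕ, f (((n+1:ℕ):ℤ)) := by
        have := tprod_eq_zero_mul' (f := fun n : ℕ => f ((n:ℤ)))
          (hMnat1.congr fun n => by push_cast; ring_nf)
        simpa using this
      rw [h1]
      have h2 : ∏' n : ℕ, f (((n+1:ℕ):ℤ)) = T := by
        rw [← hFprod]
        refine tprod_congr fun n => ?_
        simp only [hf_def, hF_def]; push_cast; ring_nf
      rw [h2]
      norm_num [hf0]
    rw [hZval, hneg_val, hnat_val]
    -- final arithmetic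
    have hu : (L / Real.sqrt 2) ≠ 0 := by positivity
    have hv : (L / 2 : ℝ) ≠ 0 := by positivity
    have hsv : Real.sin (L / 2) ≠ 0 := ne_of_gt hsinv
    rw [hT_def]
    have hu2 : (L / Real.sqrt 2) ^ 2 = L ^ 2 / 2 := by
      rw [div_pow, hs2]
    field_simp
    linear_combination -hs2
end

section
/- Let 0 < L < 2π and for k = (k₁,k₂) ∈ ℤ² set λ_k = 3 / ( (2π/L)² (k₁² + k₂²) - 1 ). Then the infinite product ∏_{k ∈ ℤ²} ( 1 + λ_k ) e^{-λ_k} converges (the family ( (1 + λ_k) e^{-λ_k} )_{k ∈ ℤ²} is multipliable) and its value is nonzero. -/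
open Real

private lemma log_one_add_sub_bound {x : ℝ} (hx : 0 ≤ x) :
    |Real.log (1 + x) - x| ≤ x ^ 2 := by
  have h1 : (0:ℝ) < 1 + x := by linarith
  have hub : Real.log (1 + x) ≤ x := by
    have := Real.log_le_sub_one_of_pos h1
    linarith
  have hlb : x - x ^ 2 ≤ Real.log (1 + x) := by
    have h2 : Real.log (1 + x)⁻¹ ≤ (1 + x)⁻¹ - 1 :=
      Real.log_le_sub_one_of_pos (by positivity)
    rw [Real.log_inv] at h2
    have h4 : x - x ^ 2 ≤ x / (1 + x) := by
      rw [div_eq_mul_inv]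
      have h5 : (x - x ^ 2) * (1 + x) ≤ x := by nlinarith [pow_nonneg hx 3]
      calc x - x ^ 2 = ((x - x ^ 2) * (1 + x)) * (1 + x)⁻¹ := by
            field_simp
        _ ≤ x * (1 + x)⁻¹ := by
            apply mul_le_mul_of_nonneg_right h5 (by positivity)
    have h6 : x / (1 + x) = 1 - (1 + x)⁻¹ := by field_simp; ring
    linarith
  rw [abs_le]
  constructor <;> nlinarith [sq_nonneg x]

private lemma summable_prod_int_norm_rpow :
    Summable (fun k : ℤ × ℤ => ‖k‖ ^ (-(4:ℝ))) := by
  have h := EisensteinSeries.summable_one_div_norm_rpow (k := 4) (by norm_num)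
  have := ((finTwoArrowEquiv ℤ).summable_iff
      (f := fun k : ℤ × ℤ => ‖k‖ ^ (-(4:ℝ)))).mp ?_
  · exact this
  · refine h.congr fun x => ?_
    have hn : ‖finTwoArrowEquiv ℤ x‖ = ‖x‖ := by
      rw [EisensteinSeries.norm_eq_max_natAbs]
      simp only [finTwoArrowEquiv_apply, Prod.norm_def, Int.norm_eq_abs, Nat.cast_max,
        Nat.cast_natAbs, Int.cast_abs]
      simp
    simp only [Function.comp]
    rw [← hn]

set_option maxHeartbeats 1000000 in
/-- The Carleman–Fredholm regularized determinant
`det₂(1 + 3(-Δ-1)⁻¹) = ∏_{k ∈ ℤ²} (1 + λ_k) e^{-λ_k}` with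
`λ_k = 3/((2π/L)²(k₁² + k₂²) - 1)` converges and is nonzero for `0 < L < 2π`. -/
theorem carleman_fredholm_determinant_two_dim (L : ℝ) (hL : 0 < L) (hL' : L < 2 * π)
    (lam : ℤ × ℤ → ℝ)
    (hlam : ∀ k : ℤ × ℤ,
      lam k = 3 / ((2 * π / L) ^ 2 * ((k.1 : ℝ) ^ 2 + (k.2 : ℝ) ^ 2) - 1)) :
    Multipliable (fun k : ℤ × ℤ => (1 + lam k) * Real.exp (-lam k)) ∧
    (∏' k : ℤ × ℤ, (1 + lam k) * Real.exp (-lam k)) ≠ 0 := by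
  set c : ℝ := (2 * π / L) ^ 2 with hc_def
  have ht : 1 < 2 * π / L := (one_lt_div hL).mpr hL'
  have hc : 1 < c := by nlinarith
  -- notation
  set f : ℤ × ℤ → ℝ := fun k => (1 + lam k) * Real.exp (-lam k) with hf_def
  set g : ℤ × ℤ → ℝ := fun k => Real.log (1 + lam k) - lam k with hg_def
  set N : ℤ × ℤ → ℝ := fun k => (k.1 : ℝ) ^ 2 + (k.2 : ℝ) ^ 2 with hN_def
  have hN1 : ∀ k : ℤ × ℤ, k ≠ (0, 0) → 1 ≤ N k := by
    intro k hk
    have : k.1 ≠ 0 ∨ k.2 ≠ 0 := by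
      by_contra h
      push_neg at h
      exact hk (Prod.ext h.1 h.2)
    rcases this with h | h
    · have h1 : (1:ℤ) ≤ |k.1| := Int.one_le_abs h
      have h1' : (1:ℝ) ≤ |(k.1:ℝ)| := by rw [← Int.cast_abs]; exact_mod_cast h1
      have := sq_nonneg ((k.2:ℝ))
      have habs : |(k.1:ℝ)| ^ 2 = (k.1:ℝ) ^ 2 := sq_abs _
      simp only [hN_def]
      nlinarith [abs_nonneg ((k.1:ℝ))]
    · have h1 : (1:ℤ) ≤ |k.2| := Int.one_le_abs h
      have h1' : (1:ℝ) ≤ |(k.2:ℝ)| := by rw [← Int.cast_abs]; exact_mod_cast h1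
      have := sq_nonneg ((k.1:ℝ))
      have habs : |(k.2:ℝ)| ^ 2 = (k.2:ℝ) ^ 2 := sq_abs _
      simp only [hN_def]
      nlinarith [abs_nonneg ((k.2:ℝ))]
  have hden : ∀ k : ℤ × ℤ, k ≠ (0, 0) → (c - 1) * N k ≤ c * N k - 1 := by
    intro k hk
    have h1 := hN1 k hk
    nlinarith
  have hdenpos : ∀ k : ℤ × ℤ, k ≠ (0, 0) → 0 < c * N k - 1 := by
    intro k hk
    have h1 := hN1 k hk
    have h2 := hden k hk
    nlinarith
  have hlam_eq : ∀ k : ℤ × ℤ, lam k = 3 / (c * N k - 1) := fun k => hlam k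
  have hlam_pos : ∀ k : ℤ × ℤ, k ≠ (0, 0) → 0 < lam k := by
    intro k hk
    rw [hlam_eq k]
    exact div_pos (by norm_num) (hdenpos k hk)
  have hlam_le : ∀ k : ℤ × ℤ, k ≠ (0, 0) → lam k ≤ 3 / ((c - 1) * N k) := by
    intro k hk
    rw [hlam_eq k]
    apply div_le_div_of_nonneg_left (by norm_num)
      (by nlinarith [hN1 k hk]) (hden k hk)
  -- square bound
  have hnormsq : ∀ k : ℤ × ℤ, ‖k‖ ^ 2 ≤ N k := by
    intro k
    have : ‖k‖ = max ‖k.1‖ ‖k.2‖ := rfl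
    rw [this]
    simp only [Int.norm_eq_abs, hN_def]
    rcases max_cases |(k.1:ℝ)| |(k.2:ℝ)| with ⟨h, _⟩ | ⟨h, _⟩ <;> push_cast [h] <;>
      nlinarith [sq_abs ((k.1:ℝ)), sq_abs ((k.2:ℝ)), sq_nonneg ((k.1:ℝ)), sq_nonneg ((k.2:ℝ))]
  have hsq_bound : ∀ k : ℤ × ℤ, k ≠ (0, 0) →
      lam k ^ 2 ≤ 9 / (c - 1) ^ 2 * ‖k‖ ^ (-(4:ℝ)) := by
    intro k hk
    have hNk := hN1 k hk
    have hNpos : 0 < N k := by linarith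
    have hnorm_pos : (0:ℝ) < ‖k‖ := by
      rw [norm_pos_iff]
      exact fun h => hk h
    have h1 : lam k ^ 2 ≤ (3 / ((c - 1) * N k)) ^ 2 := by
      have := hlam_le k hk
      have := (hlam_pos k hk).le
      nlinarith
    have h2 : (3 / ((c - 1) * N k)) ^ 2 = 9 / (c - 1) ^ 2 * (N k ^ 2)⁻¹ := by
      field_simp
      ring
    have h3 : ‖k‖ ^ (-(4:ℝ)) = (‖k‖ ^ (4:ℕ))⁻¹ := by
      rw [Real.rpow_neg (norm_nonneg _), show (4:ℝ) = ((4:ℕ):ℝ) by norm_num,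
        Real.rpow_natCast]
    have h4 : ‖k‖ ^ (4:ℕ) ≤ N k ^ 2 := by
      have := hnormsq k
      nlinarith [sq_nonneg ‖k‖, norm_nonneg k]
    have h5 : (N k ^ 2)⁻¹ ≤ (‖k‖ ^ (4:ℕ))⁻¹ := by
      apply inv_anti₀ (by positivity) h4
    calc lam k ^ 2 ≤ (3 / ((c - 1) * N k)) ^ 2 := h1
      _ = 9 / (c - 1) ^ 2 * (N k ^ 2)⁻¹ := h2
      _ ≤ 9 / (c - 1) ^ 2 * (‖k‖ ^ (4:ℕ))⁻¹ :=
          mul_le_mul_of_nonneg_left h5 (by positivity)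
      _ = 9 / (c - 1) ^ 2 * ‖k‖ ^ (-(4:ℝ)) := by rw [h3]
  -- the singleton to remove
  set S : Set (ℤ × ℤ) := {(0, 0)} with hS_def
  have hmem : ∀ x : ↥Sᶜ, (x : ℤ × ℤ) ≠ (0, 0) := by
    intro x h
    exact x.2 (by simp [hS_def, h])
  -- summability of g on the complement
  have hbase : Summable (fun x : ↥Sᶜ =>
      9 / (c - 1) ^ 2 * ‖(x : ℤ × ℤ)‖ ^ (-(4:ℝ))) :=
    ((summable_prod_int_norm_rpow.mul_left (9 / (c - 1) ^ 2))).comp_injective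
      Subtype.val_injective
  have hgsum : Summable (fun x : ↥Sᶜ => g x) := by
    apply Summable.of_norm_bounded hbase
    intro x
    have hx := hmem x
    have hpos := (hlam_pos _ hx).le
    have h1 : |g (x : ℤ × ℤ)| ≤ lam (x : ℤ × ℤ) ^ 2 := by
      simpa [hg_def] using log_one_add_sub_bound hpos
    calc ‖g (x : ℤ × ℤ)‖ = |g (x : ℤ × ℤ)| := rfl
      _ ≤ lam (x : ℤ × ℤ) ^ 2 := h1
      _ ≤ 9 / (c - 1) ^ 2 * ‖(x : ℤ × ℤ)‖ ^ (-(4:ℝ)) := hsq_bound _ hx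
  -- from summability of g to HasProd of f on the complement
  have hexp_eq : (Real.exp ∘ fun x : ↥Sᶜ => g x) = fun x : ↥Sᶜ => f x := by
    funext x
    have hx := hmem x
    have hpos : (0:ℝ) < 1 + lam (x : ℤ × ℤ) := by
      have := hlam_pos _ hx
      linarith
    simp only [Function.comp, hg_def, hf_def]
    rw [sub_eq_add_neg, Real.exp_add, Real.exp_log hpos]
  have hprod_compl : HasProd (fun x : ↥Sᶜ => f x)
      (Real.exp (∑' x : ↥Sᶜ, g x)) := by
    have := hgsum.hasSum.rexp
    rwa [hexp_eq] at this
  -- product over the singleton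
  have h0 : HasProd (f ∘ (↑) : S → ℝ) (f (0, 0)) := by
    have hb : (⟨(0, 0), by simp [hS_def]⟩ : ↥S) = (⟨(0, 0), by simp [hS_def]⟩ : ↥S) := rfl
    have := hasProd_single (f := (f ∘ (↑) : S → ℝ))
      (⟨(0, 0), by simp [hS_def]⟩ : ↥S) ?_
    · simpa using this
    · intro b' hb'
      exfalso
      apply hb'
      have hb2 : (b' : ℤ × ℤ) = (0, 0) := b'.2
      exact Subtype.ext hb2
  have hprod : HasProd f (f (0, 0) * Real.exp (∑' x : ↥Sᶜ, g x)) :=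
    h0.mul_compl hprod_compl
  have hlam0 : lam (0, 0) = -3 := by
    rw [hlam (0, 0)]
    norm_num
  have hf0 : f (0, 0) = -2 * Real.exp 3 := by
    simp only [hf_def, hlam0]
    norm_num
  refine ⟨hprod.multipliable, ?_⟩
  rw [hprod.tprod_eq, hf0]
  have h1 : Real.exp (∑' x : ↥Sᶜ, g x) ≠ 0 := Real.exp_ne_zero _
  have h2 : (-2 : ℝ) * Real.exp 3 ≠ 0 := by
    have h3 := Real.exp_pos (3:ℝ)
    intro h
    nlinarith
  exact mul_ne_zero h2 h1
end
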